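/- Suppose c(·,t) solves the nonlocal diffusion equation with a time-independent kernel ω(ξ) satisfying the non-advective constraint ∫_{-δ}^{δ} ω(ξ) ξ dξ = 0, with total mass C > 0. Then the mean squared displacement MSD(t) = (1/C) ∫ (x − x₀)² c(x,t) dx is an affine (linear) function of time: MSD(t) = MSD(0) + t · ∫_{-δ}^{δ} ω(ξ) ξ² dξ. -/

import Mathlib

open MeasureTheory intervalIntegral

/-- With a time-independent kernel satisfying the non-advective constraint, the mean
squared displacement of a solution of the nonlocal diffusion equation is affine in time. -/
theorem stmt_4 (δ : ℝ) (hδ : 0 < δ) (ω : ℝ → ℝ) (c : ℝ → ℝ → ℝ) (x₀ C : ℝ) (hC : 0 < C)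
    (hω : IntegrableOn ω (Set.Icc (-δ) δ))
    (hω2 : IntegrableOn (fun ξ => ω ξ * ξ ^ 2) (Set.Icc (-δ) δ))
    (hconstraint : (∫ ξ in (-δ)..δ, ω ξ * ξ) = 0)
    (hint : ∀ t, Integrable (fun x => c x t))
    (hmom2 : ∀ t, Integrable (fun x => (x - x₀) ^ 2 * c x t))
    (hmass : ∀ t, (∫ x, c x t) = C)
    (hpde : ∀ x t, HasDerivAt (fun s => c x s)
      (∫ ξ in (-δ)..δ, ω ξ * (c (x + ξ) t - c x t)) t)
    (hdiff : ∀ t, HasDerivAt (fun s => ∫ x, (x - x₀) ^ 2 * c x s)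
      (∫ x, (x - x₀) ^ 2 * ∫ ξ in (-δ)..δ, ω ξ * (c (x + ξ) t - c x t)) t)
    (hfub : ∀ t, IntegrableOn
      (fun p : ℝ × ℝ => (p.1 - x₀) ^ 2 * (ω p.2 * (c (p.1 + p.2) t - c p.1 t)))
      (Set.univ ×ˢ Set.Icc (-δ) δ)) :
    ∀ t : ℝ, (1 / C) * (∫ x, (x - x₀) ^ 2 * c x t) =
      (1 / C) * (∫ x, (x - x₀) ^ 2 * c x 0) + t * ∫ ξ in (-δ)..δ, ω ξ * ξ ^ 2 := by
  have hδδ : (-δ : ℝ) ≤ δ := by linarith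
  have huIoc : Set.uIoc (-δ) δ = Set.Ioc (-δ) δ := Set.uIoc_of_le hδδ
  have hωI : IntervalIntegrable ω volume (-δ) δ := by
    rw [intervalIntegrable_iff, huIoc]
    exact hω.mono_set Set.Ioc_subset_Icc_self
  have hω2I : IntervalIntegrable (fun ξ => ω ξ * ξ ^ 2) volume (-δ) δ := by
    rw [intervalIntegrable_iff, huIoc]
    exact hω2.mono_set Set.Ioc_subset_Icc_self
  have hω1I : IntervalIntegrable (fun ξ => ω ξ * ξ) volume (-δ) δ :=
    hωI.mul_continuousOn continuous_id.continuousOn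
  set K := ∫ ξ in (-δ)..δ, ω ξ * ξ ^ 2 with hK
  have key : ∀ t, (∫ x, (x - x₀) ^ 2 * ∫ ξ in (-δ)..δ, ω ξ * (c (x + ξ) t - c x t)) = C * K := by
    intro t
    -- first moment is integrable
    have h1 : Integrable (fun x => (x - x₀) * c x t) := by
      refine ((hint t).abs.add (hmom2 t).abs).mono'
        (((continuous_id.sub continuous_const).aestronglyMeasurable).mul
          (hint t).aestronglyMeasurable) ?_
      refine Filter.Eventually.of_forall fun x => ?_
      simp only [Pi.add_apply, Real.norm_eq_abs, abs_mul, abs_pow]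
      nlinarith [sq_nonneg (|x - x₀| - 1), abs_nonneg (c x t), abs_nonneg (x - x₀)]
    set M1 := ∫ x, (x - x₀) * c x t with hM1
    have inner : ∀ ξ : ℝ,
        (∫ x, (x - x₀) ^ 2 * (c (x + ξ) t - c x t)) = -2 * ξ * M1 + ξ ^ 2 * C := by
      intro ξ
      have hsub : Integrable (fun y => (y - x₀) ^ 2 * c y t - 2 * ξ * ((y - x₀) * c y t)) := by
        have h := (hmom2 t).sub (h1.const_mul (2 * ξ))
        exact h.congr (Filter.Eventually.of_forall fun y => by simp)
      have hshift : Integrable (fun y => (y - (x₀ + ξ)) ^ 2 * c y t) := by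
        have h := hsub.add ((hint t).const_mul (ξ ^ 2))
        exact h.congr (Filter.Eventually.of_forall fun y => by simp only [Pi.add_apply]; ring)
      have hA : Integrable (fun x => (x - x₀) ^ 2 * c (x + ξ) t) := by
        have h := hshift.comp_add_right ξ
        exact h.congr (Filter.Eventually.of_forall fun x => by ring_nf)
      have e1 : (∫ x, (x - x₀) ^ 2 * c (x + ξ) t) = ∫ y, (y - (x₀ + ξ)) ^ 2 * c y t := by
        rw [← integral_add_right_eq_self (fun y => (y - (x₀ + ξ)) ^ 2 * c y t) ξ]
        congr 1
        funext x
        ring_nf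
      have e2 : (∫ y, (y - (x₀ + ξ)) ^ 2 * c y t)
          = (∫ y, (y - x₀) ^ 2 * c y t) - 2 * ξ * M1 + ξ ^ 2 * C := by
        have heq : (fun y => (y - (x₀ + ξ)) ^ 2 * c y t)
            = fun y => ((y - x₀) ^ 2 * c y t - (2 * ξ) * ((y - x₀) * c y t))
              + ξ ^ 2 * c y t := funext fun y => by ring
        rw [heq, MeasureTheory.integral_add hsub ((hint t).const_mul (ξ ^ 2)),
          MeasureTheory.integral_sub (hmom2 t) (h1.const_mul (2 * ξ)),
          MeasureTheory.integral_const_mul, MeasureTheory.integral_const_mul, hmass t, ← hM1]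
      have esplit : (∫ x, (x - x₀) ^ 2 * (c (x + ξ) t - c x t))
          = (∫ x, (x - x₀) ^ 2 * c (x + ξ) t) - ∫ x, (x - x₀) ^ 2 * c x t := by
        rw [← MeasureTheory.integral_sub hA (hmom2 t)]
        congr 1
        funext x
        ring
      rw [esplit, e1, e2]
      ring
    -- Fubini
    have hprod : Integrable
        (Function.uncurry fun x ξ => (x - x₀) ^ 2 * (ω ξ * (c (x + ξ) t - c x t)))
        (volume.prod (volume.restrict (Set.Ioc (-δ) δ))) := by
      have hsub := (hfub t).mono_set (Set.prod_mono_right Set.Ioc_subset_Icc_self)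
      have hmeq := (Measure.prod_restrict (μ := (volume : Measure ℝ))
        (ν := (volume : Measure ℝ)) Set.univ (Set.Ioc (-δ) δ))
      rw [Measure.restrict_univ] at hmeq
      rw [hmeq, ← Measure.volume_eq_prod]
      exact hsub
    have swap : (∫ x, (x - x₀) ^ 2 * ∫ ξ in (-δ)..δ, ω ξ * (c (x + ξ) t - c x t))
        = ∫ ξ in Set.Ioc (-δ) δ, ∫ x, (x - x₀) ^ 2 * (ω ξ * (c (x + ξ) t - c x t)) := by
      have e : ∀ x : ℝ, (x - x₀) ^ 2 * ∫ ξ in (-δ)..δ, ω ξ * (c (x + ξ) t - c x t)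
          = ∫ ξ in Set.Ioc (-δ) δ, (x - x₀) ^ 2 * (ω ξ * (c (x + ξ) t - c x t)) := by
        intro x
        rw [intervalIntegral.integral_of_le hδδ, ← MeasureTheory.integral_const_mul]
      simp_rw [e]
      exact integral_integral_swap hprod
    have perξ : ∀ ξ : ℝ, (∫ x, (x - x₀) ^ 2 * (ω ξ * (c (x + ξ) t - c x t)))
        = ω ξ * (-2 * ξ * M1 + ξ ^ 2 * C) := by
      intro ξ
      have e : (∫ x, (x - x₀) ^ 2 * (ω ξ * (c (x + ξ) t - c x t)))
          = ∫ x, ω ξ * ((x - x₀) ^ 2 * (c (x + ξ) t - c x t)) := by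
        congr 1; funext x; ring
      rw [e, MeasureTheory.integral_const_mul, inner ξ]
    rw [swap]
    simp_rw [perξ]
    rw [← intervalIntegral.integral_of_le hδδ]
    have heq : Set.EqOn (fun ξ => ω ξ * (-2 * ξ * M1 + ξ ^ 2 * C))
        (fun ξ => (-2 * M1) * (ω ξ * ξ) + C * (ω ξ * ξ ^ 2)) (Set.uIcc (-δ) δ) :=
      fun ξ _ => by ring
    rw [intervalIntegral.integral_congr heq,
      intervalIntegral.integral_add (hω1I.const_mul _) (hω2I.const_mul _),
      intervalIntegral.integral_const_mul, intervalIntegral.integral_const_mul,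
      hconstraint, ← hK]
    ring
  -- integrate the constant derivative
  have hD : ∀ t, HasDerivAt (fun s => ∫ x, (x - x₀) ^ 2 * c x s) (C * K) t :=
    fun t => key t ▸ hdiff t
  have hg : ∀ t, HasDerivAt (fun s => (∫ x, (x - x₀) ^ 2 * c x s) - C * K * s) 0 t := by
    intro t
    have := (hD t).sub ((hasDerivAt_id t).const_mul (C * K))
    exact this.congr_deriv (by ring)
  have hconstf : ∀ t : ℝ, ((∫ x, (x - x₀) ^ 2 * c x t) - C * K * t)
      = ((∫ x, (x - x₀) ^ 2 * c x 0) - C * K * 0) :=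
    fun t => is_const_of_deriv_eq_zero (fun s => (hg s).differentiableAt)
      (fun s => (hg s).deriv) t 0
  intro t
  have h := hconstf t
  have hCne : C ≠ 0 := ne_of_gt hC
  field_simp
  linarith [h]
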